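/- For every pair of real numbers a and b and every real p ≥ 2, one has (a - b)(|a|^(p-2) a - |b|^(p-2) b) ≥ C (|a|^(p/2) - |b|^(p/2))^2, where C is a positive constant depending only on p (one may take C = 4(p-1)/p^2, but any explicit positive constant works). -/
import Mathlib


open Real

private lemma pow_helper (p : ℝ) (hp : 2 ≤ p) {x : ℝ} (hx : 0 ≤ x) :
    x ^ (p - 2) * x = x ^ (p - 1) := by
  rcases eq_or_lt_of_le hx with h | h
  · rw [← h, mul_zero, Real.zero_rpow (by intro h; linarith : p - 1 ≠ 0)]
  · rw [show p - 1 = (p - 2) + 1 by ring, Real.rpow_add_one h.ne']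

private lemma key (p : ℝ) (hp : 2 ≤ p) {x y : ℝ} (hy : 0 ≤ y) (hyx : y ≤ x) :
    (2 / p) * (x ^ (p / 2) - y ^ (p / 2)) ^ 2 ≤ (x - y) * (x ^ (p - 1) - y ^ (p - 1)) := by
  have hp0 : (0 : ℝ) < p := by linarith
  have hx : 0 ≤ x := hy.trans hyx
  rcases eq_or_lt_of_le hx with h | hx'
  · have hy0 : y = 0 := le_antisymm (h ▸ hyx) hy
    rw [← h, hy0, Real.zero_rpow (by positivity : p / 2 ≠ 0),
      Real.zero_rpow (by intro h; linarith : p - 1 ≠ 0)]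
    norm_num
  -- x > 0
  have hq : (1 : ℝ) ≤ p / 2 := by linarith
  have hq1 : (0 : ℝ) ≤ p / 2 - 1 := by linarith
  have hA : 0 ≤ x ^ (p / 2) - y ^ (p / 2) := by
    have := Real.rpow_le_rpow hy hyx (by positivity : (0:ℝ) ≤ p / 2)
    linarith
  -- Bernoulli step : x^(p/2) - y^(p/2) ≤ (p/2) * x^(p/2-1) * (x - y)
  have step1 : x ^ (p / 2) - y ^ (p / 2) ≤ (p / 2) * x ^ (p / 2 - 1) * (x - y) := by
    have hs : (-1 : ℝ) ≤ y / x - 1 := by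
      have : 0 ≤ y / x := div_nonneg hy hx
      linarith
    have B := one_add_mul_self_le_rpow_one_add hs hq
    have h1 : (1 + (y / x - 1)) = y / x := by ring
    rw [h1] at B
    have hxq : 0 < x ^ (p / 2) := Real.rpow_pos_of_pos hx' _
    have h2 : (y / x) ^ (p / 2) * x ^ (p / 2) = y ^ (p / 2) := by
      rw [Real.div_rpow hy hx, div_mul_cancel₀]
      exact hxq.ne'
    have B2 : (1 + (p / 2) * (y / x - 1)) * x ^ (p / 2) ≤ y ^ (p / 2) := by
      rw [← h2]
      exact mul_le_mul_of_nonneg_right B hxq.le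
    have h3 : x ^ (p / 2) / x = x ^ (p / 2 - 1) := by
      rw [Real.rpow_sub_one hx'.ne']
    have h4 : (1 + (p / 2) * (y / x - 1)) * x ^ (p / 2)
        = x ^ (p / 2) + (p / 2) * (x ^ (p / 2) / x) * y - (p / 2) * x ^ (p / 2) := by
      field_simp
      ring
    rw [h4, h3] at B2
    have h5 : (p / 2) * x ^ (p / 2 - 1) * x = (p / 2) * x ^ (p / 2) := by
      rw [mul_assoc, ← Real.rpow_add_one hx'.ne']
      norm_num
    nlinarith [B2]
  -- step 2 : x^(p/2-1) * (x^(p/2) - y^(p/2)) ≤ x^(p-1) - y^(p-1)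
  have step2 : x ^ (p / 2 - 1) * (x ^ (p / 2) - y ^ (p / 2)) ≤ x ^ (p - 1) - y ^ (p - 1) := by
    have e1 : x ^ (p / 2 - 1) * x ^ (p / 2) = x ^ (p - 1) := by
      rw [← Real.rpow_add hx']; ring_nf
    have e2 : y ^ (p - 1) = y ^ (p / 2 - 1) * y ^ (p / 2) := by
      rw [← Real.rpow_add' hy (by intro h; linarith : p / 2 - 1 + p / 2 ≠ 0)]
      ring_nf
    have e3 : y ^ (p / 2 - 1) * y ^ (p / 2) ≤ x ^ (p / 2 - 1) * y ^ (p / 2) := by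
      exact mul_le_mul_of_nonneg_right (Real.rpow_le_rpow hy hyx hq1)
        (Real.rpow_nonneg hy _)
    nlinarith [e1, e2, e3]
  -- combine
  have hxy : 0 ≤ x - y := by linarith
  have hxq1 : 0 ≤ x ^ (p / 2 - 1) := Real.rpow_nonneg hx _
  have c1 : (2 / p) * (x ^ (p / 2) - y ^ (p / 2)) ≤ x ^ (p / 2 - 1) * (x - y) := by
    have h := step1
    rw [div_mul_eq_mul_div, div_le_iff₀ hp0]
    nlinarith [h]
  calc (2 / p) * (x ^ (p / 2) - y ^ (p / 2)) ^ 2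
      = ((2 / p) * (x ^ (p / 2) - y ^ (p / 2))) * (x ^ (p / 2) - y ^ (p / 2)) := by ring
    _ ≤ (x ^ (p / 2 - 1) * (x - y)) * (x ^ (p / 2) - y ^ (p / 2)) :=
        mul_le_mul_of_nonneg_right c1 hA
    _ = (x - y) * (x ^ (p / 2 - 1) * (x ^ (p / 2) - y ^ (p / 2))) := by ring
    _ ≤ (x - y) * (x ^ (p - 1) - y ^ (p - 1)) := mul_le_mul_of_nonneg_left step2 hxy

private lemma aux (p : ℝ) (hp : 2 ≤ p) (a b : ℝ) (hb : |b| ≤ |a|) (ha : 0 ≤ a) :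
    (2 / p) * (|a| ^ (p / 2) - |b| ^ (p / 2)) ^ 2
      ≤ (a - b) * (|a| ^ (p - 2) * a - |b| ^ (p - 2) * b) := by
  have haa : |a| = a := abs_of_nonneg ha
  rcases le_or_gt 0 b with hb0 | hb0
  · have hbb : |b| = b := abs_of_nonneg hb0
    rw [haa, hbb] at hb ⊢
    have := key p hp hb0 hb
    rw [pow_helper p hp ha, pow_helper p hp hb0]
    linarith
  · have hbb : |b| = -b := abs_of_neg hb0
    set c := -b with hc
    have hc0 : 0 ≤ c := by simp [hc]; linarith
    have hca : c ≤ a := by rw [haa, hbb] at hb; linarith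
    have hkey := key p hp hc0 hca
    rw [haa, hbb]
    rw [pow_helper p hp ha]
    have hφb : c ^ (p - 2) * b = -(c ^ (p - 1)) := by
      have : c ^ (p - 2) * c = c ^ (p - 1) := pow_helper p hp hc0
      rw [show b = -c by simp [hc]]
      linarith [this]
    rw [hφb]
    have hap : 0 ≤ a ^ (p - 1) := Real.rpow_nonneg ha _
    have hcp : 0 ≤ c ^ (p - 1) := Real.rpow_nonneg hc0 _
    have hbc : a - b = a + c := by rw [hc]; ring
    rw [hbc]
    nlinarith [hkey, mul_nonneg ha hcp, mul_nonneg hc0 hap]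

private lemma aux2 (p : ℝ) (hp : 2 ≤ p) (a b : ℝ) (hb : |b| ≤ |a|) :
    (2 / p) * (|a| ^ (p / 2) - |b| ^ (p / 2)) ^ 2
      ≤ (a - b) * (|a| ^ (p - 2) * a - |b| ^ (p - 2) * b) := by
  rcases le_or_gt 0 a with ha | ha
  · exact aux p hp a b hb ha
  · have h := aux p hp (-a) (-b) (by simpa using hb) (by linarith)
    simp only [abs_neg] at h
    nlinarith [h]

/-- For every `p ≥ 2` there is a positive constant `C` (depending only on `p`) such that
for all reals `a, b`: `(a - b)(|a|^(p-2) a - |b|^(p-2) b) ≥ C (|a|^(p/2) - |b|^(p/2))²`. -/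
theorem stmt_0 (p : ℝ) (hp : 2 ≤ p) :
    ∃ C : ℝ, 0 < C ∧ ∀ a b : ℝ,
      C * (|a| ^ (p / 2) - |b| ^ (p / 2)) ^ 2
        ≤ (a - b) * (|a| ^ (p - 2) * a - |b| ^ (p - 2) * b) := by
  refine ⟨2 / p, by positivity, fun a b => ?_⟩
  rcases le_total |b| |a| with h | h
  · exact aux2 p hp a b h
  · have := aux2 p hp b a h
    nlinarith [this]
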